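/- For n ≥ 2 and a measurable function k : ℝ → ℝ, the integral J_n = ∫_{[-1,1]^n} Π_{i≠j} exp(−c·k(|t^i − t^j|)) dt^1…dt^n is bounded above by ∫_{[-1,1]} (∫_{[-1,1]} exp(−n c·k(|s−t|)) ds)^{n−1} dt, where c > 0 is a constant. -/

import Mathlib

open MeasureTheory ENNReal

lemma pi_restrict {ι : Type*} [Fintype ι] (μ : Measure ℝ) [SigmaFinite μ]
    {s : Set ℝ} (hs : MeasurableSet s) :
    Measure.pi (fun _ : ι => μ.restrict s) =
      (Measure.pi fun _ : ι => μ).restrict (Set.univ.pi fun _ => s) := by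
  refine Measure.pi_eq (μ := fun _ : ι => μ.restrict s) fun t ht => ?_
  rw [Measure.restrict_apply (MeasurableSet.univ_pi ht), ← Set.pi_inter_distrib,
    Measure.pi_pi]
  simp [Measure.restrict_apply (ht _)]

lemma lintegral_pi_prod {m : ℕ} (μ : Measure ℝ) [SigmaFinite μ]
    (f : Fin m → ℝ → ℝ≥0∞) (hf : ∀ j, Measurable (f j)) :
    ∫⁻ y : Fin m → ℝ, ∏ j, f j (y j) ∂(Measure.pi fun _ => μ) =
      ∏ j, ∫⁻ s, f j s ∂μ := by
  induction m with
  | zero =>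
      simp [lintegral_const, Measure.pi_univ]
  | succ m ih =>
      have mp := measurePreserving_piFinSuccAbove (fun _ : Fin (m + 1) => μ) 0
      set e := MeasurableEquiv.piFinSuccAbove (fun _ : Fin (m + 1) => ℝ) 0
      have hG : Measurable fun z : ℝ × (Fin m → ℝ) =>
          f 0 z.1 * ∏ j : Fin m, f j.succ (z.2 j) := by
        exact ((hf 0).comp measurable_fst).mul <|
          Finset.measurable_prod _ fun j _ => (hf j.succ).comp ((measurable_pi_apply j).comp measurable_snd)
      have := mp.lintegral_comp hG
      have he : ∀ y : Fin (m + 1) → ℝ,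
          (fun z : ℝ × (Fin m → ℝ) => f 0 z.1 * ∏ j : Fin m, f j.succ (z.2 j)) (e y)
            = ∏ j, f j (y j) := by
        intro y
        simp only [e, MeasurableEquiv.piFinSuccAbove_apply, Fin.insertNthEquiv]
        rw [Fin.prod_univ_succ]
        congr 1
      calc ∫⁻ y : Fin (m+1) → ℝ, ∏ j, f j (y j) ∂(Measure.pi fun _ => μ)
          = ∫⁻ z, f 0 z.1 * ∏ j : Fin m, f j.succ (z.2 j)
              ∂(μ.prod (Measure.pi fun _ : Fin m => μ)) := by
            rw [← this]; exact lintegral_congr fun y => (he y).symm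
        _ = (∫⁻ x, f 0 x ∂μ) * ∏ j : Fin m, ∫⁻ s, f j.succ s ∂μ := by
            rw [lintegral_prod_mul (f := f 0) (g := fun y : Fin m → ℝ => ∏ j : Fin m, f j.succ (y j)) ((hf 0).aemeasurable)
              ((Finset.measurable_prod _ fun j _ => (hf j.succ).comp (measurable_pi_apply j)).aemeasurable)]
            rw [ih (fun j => f j.succ) (fun j => hf j.succ)]
        _ = ∏ j, ∫⁻ s, f j s ∂μ := (Fin.prod_univ_succ fun j => ∫⁻ s, f j s ∂μ).symm

lemma prod_offDiag {M : Type*} [CommMonoid M] {α : Type*} [Fintype α] [DecidableEq α]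
    (f : α × α → M) :
    ∏ p ∈ Finset.univ.offDiag, f p
      = ∏ i : α, ∏ j ∈ Finset.univ.erase i, f (i, j) := by
  rw [Finset.prod_sigma']
  refine Finset.prod_nbij' (fun p => ⟨p.1, p.2⟩) (fun q => (q.1, q.2)) ?_ ?_ ?_ ?_ ?_
  · intro p hp
    simp only [Finset.mem_offDiag] at hp
    simp [Finset.mem_sigma, Finset.mem_erase, (hp.2.2 : p.1 ≠ p.2).symm]
  · intro q hq
    simp only [Finset.mem_sigma, Finset.mem_erase] at hq
    simp [Finset.mem_offDiag, hq.2.1.symm]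
  · intro p hp; rfl
  · intro q hq; rfl
  · intro p hp; rfl

lemma prod_erase_succAbove {M : Type*} [CommMonoid M] {m : ℕ} (i : Fin (m + 1))
    (f : Fin (m + 1) → M) :
    ∏ j ∈ Finset.univ.erase i, f j = ∏ l : Fin m, f (i.succAbove l) := by
  refine (Finset.prod_nbij (fun l => i.succAbove l) ?_ ?_ ?_ ?_).symm
  · intro l _
    simp [Finset.mem_erase, Fin.succAbove_ne i l]
  · intro a _ b _ h
    exact Fin.succAbove_right_injective h
  · intro j hj
    simp only [Finset.coe_erase, Set.mem_diff, Set.mem_singleton_iff] at hj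
    obtain ⟨l, rfl⟩ := Fin.exists_succAbove_eq (show j ≠ i from hj.2)
    exact ⟨l, by simp⟩
  · intro l _; rfl

lemma real_amgm {α : Type*} [Fintype α] (hcard : 0 < Fintype.card α)
    (B : α → ℝ) (hB : ∀ i, 0 ≤ B i) :
    ∏ i, B i ≤ (∑ i, B i ^ Fintype.card α) / Fintype.card α := by
  set N := Fintype.card α with hN
  have h1 : ∑ _i : α, (1 : ℝ) / N = 1 := by
    rw [Finset.sum_const, Finset.card_univ, nsmul_eq_mul, mul_one_div,
      div_self (by positivity)]
  have := Real.geom_mean_le_arith_mean_weighted Finset.univ (fun _ => 1 / N)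
    (fun i => B i ^ N) (fun i _ => by positivity) h1 (fun i _ => pow_nonneg (hB i) N)
  calc ∏ i, B i = ∏ i, (B i ^ N) ^ ((1 : ℝ) / N) := by
        refine Finset.prod_congr rfl fun i _ => ?_
        rw [← Real.rpow_natCast (B i) N, ← Real.rpow_mul (hB i), mul_one_div,
          div_self (by positivity), Real.rpow_one]
    _ ≤ ∑ i, (1 : ℝ) / N * B i ^ N := this
    _ = (∑ i, B i ^ N) / N := by
        rw [Finset.sum_div]
        exact Finset.sum_congr rfl fun i _ => one_div_mul_eq_div _ _

set_option maxHeartbeats 1000000 in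
/-- the AM–GM bound
`J_n ≤ ∫_{[-1,1]} (∫_{[-1,1]} exp(-n c k(|s-t|)) ds)^{n-1} dt`. -/
theorem stmt1 (n : ℕ) (hn : 2 ≤ n) (c : ℝ) (hc : 0 < c) (k : ℝ → ℝ) (hk : Measurable k) :
    ∫⁻ t : Fin n → ℝ in Set.univ.pi (fun _ => Set.Icc (-1 : ℝ) 1),
        ∏ p ∈ Finset.univ.offDiag,
          ENNReal.ofReal (Real.exp (-c * k |t p.1 - t p.2|)) ≤
      ∫⁻ t in Set.Icc (-1 : ℝ) 1,
        (∫⁻ s in Set.Icc (-1 : ℝ) 1,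
            ENNReal.ofReal (Real.exp (-((n : ℝ) * c) * k |s - t|))) ^ (n - 1) := by
  obtain ⟨m, rfl⟩ : ∃ m, n = m + 1 := ⟨n - 1, by omega⟩
  set μ : Measure ℝ := volume.restrict (Set.Icc (-1 : ℝ) 1) with hμ
  set N : ℕ := m + 1 with hNdef
  set H : ℝ → ℝ → ℝ≥0∞ :=
    fun s x => ENNReal.ofReal (Real.exp (-(((N : ℕ) : ℝ) * c) * k |s - x|)) with hH
  have hHx : ∀ x : ℝ, Measurable fun s => H s x := by
    intro x
    simp only [hH]
    apply ENNReal.measurable_ofReal.comp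
    apply Real.measurable_exp.comp
    apply Measurable.const_mul
    apply hk.comp
    exact (measurable_id.sub measurable_const).abs
  set g : Fin N → (Fin N → ℝ) → ℝ≥0∞ :=
    fun i t => ∏ j ∈ Finset.univ.erase i, H (t j) (t i) with hg
  have hgm : ∀ i, Measurable (g i) := by
    intro i
    rw [hg]
    simp only [hH]
    apply Finset.measurable_prod
    intro j _
    apply ENNReal.measurable_ofReal.comp
    apply Real.measurable_exp.comp
    apply Measurable.const_mul
    apply hk.comp
    exact ((measurable_pi_apply j).sub (measurable_pi_apply i)).abs
  -- rewrite LHS as integral over the pi measure of restricted measures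
  have hset : (volume : Measure (Fin N → ℝ)).restrict (Set.univ.pi fun _ => Set.Icc (-1 : ℝ) 1)
      = Measure.pi (fun _ : Fin N => μ) := by
    rw [hμ, pi_restrict volume measurableSet_Icc, volume_pi]
  rw [hset]
  -- pointwise AM-GM bound
  have hpt : ∀ t : Fin N → ℝ,
      (∏ p ∈ Finset.univ.offDiag,
        ENNReal.ofReal (Real.exp (-c * k |t p.1 - t p.2|)))
      ≤ ((N : ℝ≥0∞))⁻¹ * ∑ i, g i t := by
    intro t
    have hB : ∀ i : Fin N, (0:ℝ) ≤ ∏ j ∈ Finset.univ.erase i, Real.exp (-c * k |t i - t j|) :=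
      fun i => Finset.prod_nonneg fun j _ => (Real.exp_pos _).le
    have amgm := real_amgm (α := Fin N) (by simp [hNdef]) 
      (fun i => ∏ j ∈ Finset.univ.erase i, Real.exp (-c * k |t i - t j|)) hB
    rw [Fintype.card_fin] at amgm
    have hprod : (∏ p ∈ Finset.univ.offDiag,
        ENNReal.ofReal (Real.exp (-c * k |t p.1 - t p.2|)))
        = ENNReal.ofReal (∏ i : Fin N, ∏ j ∈ Finset.univ.erase i,
            Real.exp (-c * k |t i - t j|)) := by
      rw [← prod_offDiag (fun p => Real.exp (-c * k |t p.1 - t p.2|)),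
        ENNReal.ofReal_prod_of_nonneg (fun p _ => (Real.exp_pos _).le)]
    have hBn : ∀ i : Fin N,
        (∏ j ∈ Finset.univ.erase i, Real.exp (-c * k |t i - t j|)) ^ N
          = ∏ j ∈ Finset.univ.erase i, Real.exp (-(((N : ℕ) : ℝ) * c) * k |t j - t i|) := by
      intro i
      rw [← Finset.prod_pow]
      refine Finset.prod_congr rfl fun j _ => ?_
      rw [← Real.exp_nat_mul, abs_sub_comm (t j) (t i)]
      ring_nf
    calc (∏ p ∈ Finset.univ.offDiag,
          ENNReal.ofReal (Real.exp (-c * k |t p.1 - t p.2|)))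
        = ENNReal.ofReal (∏ i : Fin N, ∏ j ∈ Finset.univ.erase i,
            Real.exp (-c * k |t i - t j|)) := hprod
      _ ≤ ENNReal.ofReal ((∑ i : Fin N, (∏ j ∈ Finset.univ.erase i,
            Real.exp (-c * k |t i - t j|)) ^ N) / N) := ENNReal.ofReal_le_ofReal amgm
      _ = ((N : ℝ≥0∞))⁻¹ * ∑ i, g i t := by
          rw [ENNReal.ofReal_div_of_pos (by positivity), ENNReal.ofReal_natCast,
            div_eq_mul_inv, mul_comm]
          congr 1
          rw [ENNReal.ofReal_sum_of_nonneg (fun i _ => by positivity)]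
          refine Finset.sum_congr rfl fun i _ => ?_
          rw [hBn i, ENNReal.ofReal_prod_of_nonneg (fun j _ => (Real.exp_pos _).le)]
  -- each symmetrized integral equals the RHS integral
  have key : ∀ i : Fin N, ∫⁻ t, g i t ∂(Measure.pi fun _ : Fin N => μ)
      = ∫⁻ x, (∫⁻ s, H s x ∂μ) ^ m ∂μ := by
    intro i
    have mp := measurePreserving_piFinSuccAbove (fun _ : Fin N => μ) i
    set e := MeasurableEquiv.piFinSuccAbove (fun _ : Fin N => ℝ) i with he
    have hG : Measurable fun z : ℝ × (Fin m → ℝ) => ∏ l : Fin m, H (z.2 l) z.1 := by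
      simp only [hH]
      apply Finset.measurable_prod
      intro l _
      apply ENNReal.measurable_ofReal.comp
      apply Real.measurable_exp.comp
      apply Measurable.const_mul
      apply hk.comp
      exact (((measurable_pi_apply (X := fun _ : Fin m => ℝ) l).comp measurable_snd).sub measurable_fst).abs
    have h1 := mp.lintegral_comp hG
    have h2 : ∀ t : Fin N → ℝ,
        (fun z : ℝ × (Fin m → ℝ) => ∏ l : Fin m, H (z.2 l) z.1) (e t) = g i t := by
      intro t
      rw [hg]
      simp only
      rw [prod_erase_succAbove i (fun j => H (t j) (t i))]
      simp [he, MeasurableEquiv.piFinSuccAbove, Fin.insertNthEquiv, Fin.removeNth]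
    calc ∫⁻ t, g i t ∂(Measure.pi fun _ : Fin N => μ)
        = ∫⁻ z, ∏ l : Fin m, H (z.2 l) z.1 ∂(μ.prod (Measure.pi fun _ : Fin m => μ)) := by
          rw [← h1]; exact lintegral_congr fun t => (h2 t).symm
      _ = ∫⁻ x, ∫⁻ y : Fin m → ℝ, ∏ l : Fin m, H (y l) x
            ∂(Measure.pi fun _ : Fin m => μ) ∂μ := lintegral_prod _ hG.aemeasurable
      _ = ∫⁻ x, (∫⁻ s, H s x ∂μ) ^ m ∂μ := by
          refine lintegral_congr fun x => ?_
          rw [lintegral_pi_prod μ (fun _ s => H s x) (fun _ => hHx x)]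
          simp [Finset.prod_const]
  calc ∫⁻ t, (∏ p ∈ Finset.univ.offDiag,
          ENNReal.ofReal (Real.exp (-c * k |t p.1 - t p.2|)))
          ∂(Measure.pi fun _ : Fin N => μ)
      ≤ ∫⁻ t, ((N : ℝ≥0∞))⁻¹ * ∑ i, g i t ∂(Measure.pi fun _ : Fin N => μ) :=
        lintegral_mono hpt
    _ = ((N : ℝ≥0∞))⁻¹ * ∑ i : Fin N, ∫⁻ t, g i t ∂(Measure.pi fun _ : Fin N => μ) := by
        rw [lintegral_const_mul' _ _ (by simp),
          lintegral_finset_sum _ (fun i _ => hgm i)]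
    _ = ((N : ℝ≥0∞))⁻¹ * ∑ _i : Fin N, ∫⁻ x, (∫⁻ s, H s x ∂μ) ^ m ∂μ := by
        rw [Finset.sum_congr rfl fun i _ => key i]
    _ = ∫⁻ x, (∫⁻ s, H s x ∂μ) ^ m ∂μ := by
        rw [Finset.sum_const, Finset.card_univ, Fintype.card_fin, nsmul_eq_mul,
          ← mul_assoc, ENNReal.inv_mul_cancel (by simp [hNdef]) (by simp), one_mul]
    _ = ∫⁻ t in Set.Icc (-1 : ℝ) 1,
        (∫⁻ s in Set.Icc (-1 : ℝ) 1,
            ENNReal.ofReal (Real.exp (-(((N : ℕ) : ℝ) * c) * k |s - t|))) ^ (N - 1) := by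
        simp [hH, hμ, hNdef]
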